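/- Let k be a field, G a group, and V a finite-dimensional kG-module. If x, y, z are elements of G with xyz = 1 and the subgroup H = ⟨x, y⟩ satisfies C_V(H) = 0 and C_{V*}(H) = 0 (no nonzero fixed vectors on V or its dual), then dim C_V(x) + dim C_V(y) + dim C_V(z) ≤ dim V. -/

import Mathlib

open Module

private lemma fixed_of_gen {k G W : Type*} [Field k] [Group G] [AddCommGroup W] [Module k W]
    (σ : Representation k G W) (w : W) {s : Set G} (hs : ∀ g ∈ s, σ g w = w) :
    ∀ h ∈ Subgroup.closure s, σ h w = w := by
  intro h hh
  induction hh using Subgroup.closure_induction with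
  | mem g hg => exact hs g hg
  | one => simp
  | mul a b _ _ ha hb =>
      rw [map_mul]
      simpa [Module.End.mul_apply, hb] using ha
  | inv a _ ha =>
      have h2 : σ a⁻¹ (σ a w) = σ a⁻¹ w := congrArg _ ha
      rw [← Module.End.mul_apply, ← map_mul, inv_mul_cancel, map_one,
        Module.End.one_apply] at h2
      exact h2.symm

/-- Scott's Lemma for a triple with product 1: if `x * y * z = 1` and the subgroup
generated by `x` and `y` has no nonzero fixed vectors on `V` nor on its dual, then the
dimensions of the fixed spaces of `x`, `y`, `z` sum to at most `dim V`. -/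
theorem scott_lemma_triple {k G V : Type*} [Field k] [Group G]
    [AddCommGroup V] [Module k V] [FiniteDimensional k V]
    (ρ : Representation k G V) (x y z : G) (hxyz : x * y * z = 1)
    (hV : ∀ v : V, (∀ h ∈ Subgroup.closure ({x, y} : Set G), ρ h v = v) → v = 0)
    (hVdual : ∀ f : Module.Dual k V,
      (∀ h ∈ Subgroup.closure ({x, y} : Set G), ρ.dual h f = f) → f = 0) :
    finrank k (LinearMap.ker (ρ x - 1)) + finrank k (LinearMap.ker (ρ y - 1)) +
      finrank k (LinearMap.ker (ρ z - 1)) ≤ finrank k V := by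
  classical
  set Bx := LinearMap.range (ρ x - 1) with hBx
  set By := LinearMap.range (ρ y - 1) with hBy
  set Bz := LinearMap.range (ρ z - 1) with hBz
  -- the key linear map T : Bx × By × Bz → V
  set T : (Bx × By × Bz) →ₗ[k] V :=
    Bx.subtype ∘ₗ LinearMap.fst k Bx (By × Bz)
      + (ρ x ∘ₗ By.subtype) ∘ₗ (LinearMap.fst k By Bz ∘ₗ LinearMap.snd k Bx (By × Bz))
      + (ρ (x * y) ∘ₗ Bz.subtype) ∘ₗ (LinearMap.snd k By Bz ∘ₗ LinearMap.snd k Bx (By × Bz))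
    with hT
  have hTapp : ∀ (a : Bx) (b : By) (c : Bz),
      T (a, b, c) = (a : V) + ρ x (b : V) + ρ (x * y) (c : V) := by
    intro a b c
    simp [hT, add_assoc]
  -- the diagonal map δ : V → Bx × By × Bz
  set δ : V →ₗ[k] (Bx × By × Bz) :=
    (ρ x - 1).rangeRestrict.prod ((ρ y - 1).rangeRestrict.prod (ρ z - 1).rangeRestrict)
    with hδ
  -- δ is injective
  have hδinj : Function.Injective δ := by
    rw [← LinearMap.ker_eq_bot, Submodule.eq_bot_iff]
    intro v hv
    simp only [hδ, LinearMap.mem_ker, LinearMap.prod_apply, Prod.mk_eq_zero, Function.prod] at hv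
    obtain ⟨h1, h2, -⟩ := hv
    have h1' : ρ x v = v := by
      have := congrArg (Bx.subtype) h1
      simpa [sub_eq_zero] using this
    have h2' : ρ y v = v := by
      have := congrArg (By.subtype) h2
      simpa [sub_eq_zero] using this
    refine hV v (fixed_of_gen ρ v ?_)
    rintro g (rfl | rfl)
    · exact h1'
    · exact h2'
  -- T ∘ δ = 0
  have hTδ : ∀ v : V, T (δ v) = 0 := by
    intro v
    have : δ v = ((ρ x - 1).rangeRestrict v, (ρ y - 1).rangeRestrict v,
        (ρ z - 1).rangeRestrict v) := rfl
    rw [this, hTapp]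
    have e1 : ((ρ x - 1).rangeRestrict v : V) = ρ x v - v := rfl
    have e2 : ((ρ y - 1).rangeRestrict v : V) = ρ y v - v := rfl
    have e3 : ((ρ z - 1).rangeRestrict v : V) = ρ z v - v := rfl
    rw [e1, e2, e3, map_sub, map_sub]
    have exy : ρ x (ρ y v) = ρ (x * y) v := by rw [map_mul]; rfl
    have exyz : ρ (x * y) (ρ z v) = v := by
      rw [← Module.End.mul_apply, ← map_mul, hxyz, map_one, Module.End.one_apply]
    rw [exy, exyz]
    abel
  -- T is surjective
  have hTsurj : Function.Surjective T := by
    rw [← LinearMap.range_eq_top]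
    by_contra hne
    obtain ⟨f, hf0, hfmap⟩ := (LinearMap.range T).exists_dual_map_eq_bot_of_lt_top
      (lt_top_iff_ne_top.mpr hne) inferInstance
    have hfvanish : ∀ w ∈ LinearMap.range T, f w = 0 := by
      intro w hw
      have : f w ∈ Submodule.map f (LinearMap.range T) := ⟨w, hw, rfl⟩
      rwa [hfmap, Submodule.mem_bot] at this
    -- f vanishes on Bx and By
    have hfx : ∀ v : V, f (ρ x v) = f v := by
      intro v
      have : (ρ x - 1) v ∈ LinearMap.range T := by
        refine ⟨(⟨(ρ x - 1) v, ⟨v, rfl⟩⟩, 0, 0), ?_⟩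
        rw [hTapp]; simp
      have h0 := hfvanish _ this
      have : f (ρ x v - v) = 0 := by simpa using h0
      rw [map_sub, sub_eq_zero] at this
      exact this
    have hfy : ∀ v : V, f (ρ y v) = f v := by
      intro v
      have : (ρ y - 1) v ∈ LinearMap.range T := by
        refine ⟨(⟨-((ρ x - 1) (ρ y v - v)), Submodule.neg_mem _ ⟨_, rfl⟩⟩,
          ⟨(ρ y - 1) v, ⟨v, rfl⟩⟩, 0), ?_⟩
        rw [hTapp]
        simp only [Submodule.coe_mk, ZeroMemClass.coe_zero, map_zero, add_zero,
          LinearMap.sub_apply, Module.End.one_apply, map_sub]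
        abel
      have h0 := hfvanish _ this
      have : f (ρ y v - v) = 0 := by simpa using h0
      rw [map_sub, sub_eq_zero] at this
      exact this
    -- hence f is fixed by the dual action of the subgroup, so f = 0
    refine hf0 (hVdual f (fixed_of_gen ρ.dual f ?_))
    intro g hg
    have hfg : ∀ v : V, f (ρ g v) = f v := by
      rcases hg with rfl | rfl
      · exact hfx
      · exact hfy
    ext v
    have h1 : f (ρ g (ρ g⁻¹ v)) = f (ρ g⁻¹ v) := hfg _
    rw [← Module.End.mul_apply, ← map_mul, mul_inv_cancel, map_one, Module.End.one_apply] at h1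
    simpa [Representation.dual] using h1.symm
  -- dimension count
  have hrangeT : finrank k (LinearMap.range T) = finrank k V := by
    rw [LinearMap.range_eq_top.mpr hTsurj, finrank_top]
  have hkerT : finrank k V ≤ finrank k (LinearMap.ker T) := by
    have hle : LinearMap.range δ ≤ LinearMap.ker T := by
      rintro w ⟨v, rfl⟩
      exact hTδ v
    calc finrank k V = finrank k (LinearMap.range δ) :=
          (LinearMap.finrank_range_of_inj hδinj).symm
      _ ≤ finrank k (LinearMap.ker T) := Submodule.finrank_mono hle
  have hrn := LinearMap.finrank_range_add_finrank_ker T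
  have hprod : finrank k (Bx × By × Bz) = finrank k Bx + (finrank k By + finrank k Bz) := by
    rw [Module.finrank_prod, Module.finrank_prod]
  have hx' := LinearMap.finrank_range_add_finrank_ker (ρ x - 1)
  have hy' := LinearMap.finrank_range_add_finrank_ker (ρ y - 1)
  have hz' := LinearMap.finrank_range_add_finrank_ker (ρ z - 1)
  rw [← hBx] at hx'; rw [← hBy] at hy'; rw [← hBz] at hz'
  omega
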